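/- Let p be a prime with p ≥ 5, take coefficients a = 1, b = −3 (i.e., λ = p − 3), c = 0, so that φ(S) = (∑_{x∈S} x)² − 3·(∑_{x∈S} x²), and let k be the smallest integer greater than 2 dividing p − 1. Then 4 ≤ D(φ,p) ≤ 2(k−1)·(p−1)/k + 1. -/

import Mathlib

/-- `phi a b c S = a·(∑_{x∈S} x)² + b·(∑_{x∈S} x²) + c·(∑_{x∈S} x)`,
sums taken with multiplicity. -/
def phi {p : ℕ} (a b c : ZMod p) (S : Multiset (ZMod p)) : ZMod p :=
  a * S.sum ^ 2 + b * (S.map (fun x => x ^ 2)).sum + c * S.sum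

/-- `S` is φ-zero-free: no nonempty submultiset `T` of `S` has `phi a b c T = 0`. -/
def PhiZeroFree {p : ℕ} (a b c : ZMod p) (S : Multiset (ZMod p)) : Prop :=
  ∀ T : Multiset (ZMod p), T ≤ S → T ≠ 0 → phi a b c T ≠ 0

/-- The set of positive lengths `ℓ` such that every multiset over `ZMod p` of
cardinality at least `ℓ` has a nonempty submultiset `T` with `phi a b c T = 0`.
The Davenport φ-constant `D(φ,p)` is the least element of this set. -/
def DavSet {p : ℕ} (a b c : ZMod p) : Set ℕ :=
  {ℓ : ℕ | 0 < ℓ ∧ ∀ S : Multiset (ZMod p), ℓ ≤ Multiset.card S →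
    ∃ T : Multiset (ZMod p), T ≤ S ∧ T ≠ 0 ∧ phi a b c T = 0}

lemma geom_zero {p : ℕ} [Fact p.Prime] (k : ℕ) (u : ZMod p) (hu : u ≠ 1) (huk : u ^ k = 1) :
    ∑ i ∈ Finset.range k, u ^ i = 0 := by
  have h := geom_sum_mul u k
  rw [huk, sub_self] at h
  rcases mul_eq_zero.mp h with h | h
  · exact h
  · exact absurd (sub_eq_zero.mp h) hu

lemma orbit_phi_zero {p : ℕ} [Fact p.Prime] (k : ℕ) (hk2 : 2 < k)
    (ζ u : (ZMod p)ˣ) (hζ : orderOf ζ = k) :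
    phi (1 : ZMod p) (-3) 0
      ((Finset.image (fun i => ((u * ζ ^ i : (ZMod p)ˣ) : ZMod p)) (Finset.range k)).val) = 0 := by
  classical
  set f : ℕ → ZMod p := fun i => ((u * ζ ^ i : (ZMod p)ˣ) : ZMod p) with hf
  have hinj : ∀ x ∈ Finset.range k, ∀ y ∈ Finset.range k, f x = f y → x = y := by
    intro i hi j hj hij
    have h1 : (u * ζ ^ i) = (u * ζ ^ j) := Units.ext hij
    have h2 : ζ ^ i = ζ ^ j := mul_left_cancel h1
    exact pow_injOn_Iio_orderOf (by simpa [hζ] using Finset.mem_range.mp hi)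
      (by simpa [hζ] using Finset.mem_range.mp hj) h2
  set F := Finset.image f (Finset.range k) with hF
  have hζ1 : (ζ : ZMod p) ≠ 1 := by
    intro h
    have : ζ = 1 := Units.ext (by simpa using h)
    rw [this, orderOf_one] at hζ; omega
  have hζk : ((ζ : ZMod p)) ^ k = 1 := by
    have : ζ ^ k = 1 := by rw [← hζ]; exact pow_orderOf_eq_one ζ
    simpa using congrArg Units.val this
  have hζ2 : ((ζ : ZMod p)) ^ 2 ≠ 1 := by
    intro h
    have h' : ζ ^ 2 = 1 := Units.ext (by push_cast; simpa using h)
    have := orderOf_dvd_of_pow_eq_one h'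
    rw [hζ] at this
    have := Nat.le_of_dvd (by norm_num) this
    omega
  have hsum : F.val.sum = 0 := by
    have h1 : F.val.sum = ∑ a ∈ F, a := by
      rw [← Multiset.map_id F.val]; rfl
    rw [h1, hF, Finset.sum_image hinj]
    have : ∀ i ∈ Finset.range k, f i = (u : ZMod p) * ((ζ : ZMod p)) ^ i := by
      intro i _; simp [hf]
    rw [Finset.sum_congr rfl this, ← Finset.mul_sum, geom_zero k _ hζ1 hζk, mul_zero]
  have hsq : (F.val.map (fun x => x ^ 2)).sum = 0 := by
    have h1 : (F.val.map (fun x => x ^ 2)).sum = ∑ a ∈ F, a ^ 2 := rfl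
    rw [h1, hF, Finset.sum_image hinj]
    have : ∀ i ∈ Finset.range k, (f i) ^ 2 = (u : ZMod p) ^ 2 * (((ζ : ZMod p)) ^ 2) ^ i := by
      intro i _; simp [hf]; ring
    rw [Finset.sum_congr rfl this, ← Finset.mul_sum,
      geom_zero k _ hζ2 (by rw [← pow_mul, mul_comm, pow_mul, hζk, one_pow]), mul_zero]
  simp [phi, hsum, hsq]

lemma small_free (p : ℕ) (hp : p.Prime) (hp5 : 5 ≤ p) :
    ∀ T : Multiset (ZMod p), T ≤ (1 ::ₘ 1 ::ₘ {-1}) → T ≠ 0 →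
      phi (1 : ZMod p) (-3) 0 T ≠ 0 := by
  haveI : Fact p.Prime := ⟨hp⟩
  intro T hT hT0
  have hchar : ∀ n : ℕ, ¬ (p ∣ n) → ((n : ZMod p)) ≠ 0 := by
    intro n hn h
    exact hn ((CharP.cast_eq_zero_iff (ZMod p) p n).mp h)
  have hnd2 : ¬ (p ∣ 2) := fun h => by have := Nat.le_of_dvd (by norm_num) h; omega
  have hnd6 : ¬ (p ∣ 6) := by
    intro h
    have := Nat.le_of_dvd (by norm_num) h
    interval_cases p <;> revert h hp <;> decide
  have hnd8 : ¬ (p ∣ 8) := by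
    intro h
    have := Nat.le_of_dvd (by norm_num) h
    interval_cases p <;> revert h hp <;> decide
  have h2 : (2 : ZMod p) ≠ 0 := by exact_mod_cast hchar 2 hnd2
  have h6 : (6 : ZMod p) ≠ 0 := by exact_mod_cast hchar 6 hnd6
  have h8 : (8 : ZMod p) ≠ 0 := by exact_mod_cast hchar 8 hnd8
  have h1 : (1 : ZMod p) ≠ -1 := by
    intro h
    exact h2 (by linear_combination h)
  set m := T.count 1 with hm
  set n := T.count (-1 : ZMod p) with hn
  have hS1 : (1 ::ₘ 1 ::ₘ ({-1} : Multiset (ZMod p))).count 1 = 2 := by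
    simp [Multiset.count_cons, Multiset.count_singleton, h1]
  have hSm : (1 ::ₘ 1 ::ₘ ({-1} : Multiset (ZMod p))).count (-1) = 1 := by
    simp [Multiset.count_cons, Multiset.count_singleton, Ne.symm h1]
  have hm2 : m ≤ 2 := hS1 ▸ Multiset.count_le_of_le 1 hT
  have hn1 : n ≤ 1 := hSm ▸ Multiset.count_le_of_le (-1) hT
  have hTeq : T = Multiset.replicate m 1 + Multiset.replicate n (-1) := by
    ext b
    rw [Multiset.count_add, Multiset.count_replicate, Multiset.count_replicate]
    rcases eq_or_ne b 1 with rfl | hb1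
    · rw [if_pos rfl, if_neg (Ne.symm h1), add_zero]
    rcases eq_or_ne b (-1) with rfl | hb2
    · rw [if_neg h1, if_pos rfl, zero_add]
    · rw [if_neg (fun h => hb1 h.symm), if_neg (fun h => hb2 h.symm)]
      have hle := Multiset.count_le_of_le b hT
      have hb0 : (1 ::ₘ 1 ::ₘ ({-1} : Multiset (ZMod p))).count b = 0 := by
        simp [Multiset.count_cons, Multiset.count_singleton, hb1, hb2]
      omega
  have hcardT : Multiset.card T = m + n := by rw [hTeq]; simp
  have hpos : 0 < m + n := hcardT ▸ Multiset.card_pos.mpr hT0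
  have hphi : phi (1 : ZMod p) (-3) 0 T
      = ((m : ZMod p) - n) ^ 2 - 3 * ((m : ZMod p) + n) := by
    rw [hTeq]
    simp [phi, Multiset.sum_replicate, Multiset.map_replicate, nsmul_eq_mul, neg_one_sq]
    ring
  rw [hphi]
  interval_cases m <;> interval_cases n
  · omega
  · intro h; exact h2 (by push_cast at h ⊢; linear_combination -h)
  · intro h; exact h2 (by push_cast at h ⊢; linear_combination -h)
  · intro h; exact h6 (by push_cast at h ⊢; linear_combination -h)
  · intro h; exact h2 (by push_cast at h ⊢; linear_combination -h)
  · intro h; exact h8 (by push_cast at h ⊢; linear_combination -h)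

/-- Theorem 3.1(b): for `p ≥ 5` and `φ(S) = (∑x)² - 3(∑x²)` (the case `λ = p - 3`),
with `k` the smallest integer greater than `2` dividing `p - 1`, we have
`4 ≤ D(φ,p) ≤ 2(k-1)(p-1)/k + 1`. -/
theorem davenport_phi_lambda_p_sub_three (p : ℕ) (hp : p.Prime) (hp5 : 5 ≤ p)
    (k : ℕ) (hk : IsLeast {m : ℕ | 2 < m ∧ m ∣ p - 1} k) :
    ∃ D : ℕ, IsLeast (DavSet (1 : ZMod p) (-3) 0) D ∧
      4 ≤ D ∧ D ≤ 2 * (k - 1) * (p - 1) / k + 1 := by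
  classical
  haveI hFact : Fact p.Prime := ⟨hp⟩
  haveI : NeZero p := ⟨by omega⟩
  obtain ⟨⟨hk2, hkdvd⟩, hkmin⟩ := hk
  obtain ⟨d, hd⟩ := hkdvd
  have hp1 : 4 ≤ p - 1 := by omega
  have hdpos : 0 < d := by
    rcases Nat.eq_zero_or_pos d with rfl | h
    · simp at hd; omega
    · exact h
  have hkd : (k - 1) * d + d = k * d := by
    obtain ⟨k', rfl⟩ : ∃ k', k = k' + 1 := ⟨k - 1, by omega⟩
    simp; ring
  have hdiv : 2 * (k - 1) * (p - 1) / k = 2 * (k - 1) * d := by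
    rw [hd, show 2 * (k - 1) * (k * d) = 2 * (k - 1) * d * k by ring,
      Nat.mul_div_cancel _ (by omega)]
  have h2kd : 2 * (k - 1) * d = 2 * ((k - 1) * d) := by ring
  set ℓ := 2 * (k - 1) * (p - 1) / k + 1 with hℓ
  have hmem : ℓ ∈ DavSet (1 : ZMod p) (-3) 0 := by
    refine ⟨by omega, ?_⟩
    intro S hS
    by_contra hcon
    push_neg at hcon
    have h0 : (0 : ZMod p) ∉ S := by
      intro h
      exact hcon {0} (Multiset.singleton_le.mpr h) (by simp) (by simp [phi])
    have hcnt : ∀ x : ZMod p, S.count x ≤ 2 := by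
      intro x
      by_contra hx
      push_neg at hx
      refine hcon (Multiset.replicate 3 x) ?_ (by simp) ?_
      · rw [Multiset.le_iff_count]
        intro a
        rw [Multiset.count_replicate]
        by_cases hax : x = a
        · subst hax; rw [if_pos rfl]; omega
        · rw [if_neg hax]; omega
      · simp only [phi, Multiset.map_replicate, Multiset.sum_replicate, nsmul_eq_mul]
        push_cast
        ring
    have hcard2 : Multiset.card S ≤ 2 * S.toFinset.card := by
      calc Multiset.card S = ∑ a ∈ S.toFinset, S.count a :=
            (Multiset.toFinset_sum_count_eq S).symm
        _ ≤ ∑ _a ∈ S.toFinset, 2 := Finset.sum_le_sum (fun a _ => hcnt a)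
        _ = 2 * S.toFinset.card := by rw [Finset.sum_const, smul_eq_mul, mul_comm]
    have ht : (k - 1) * d + 1 ≤ S.toFinset.card := by
      rw [hℓ, hdiv] at hS; omega
    set U := S.toFinset with hU
    have hU0 : ∀ x ∈ U, x ≠ 0 := fun x hx hx0 =>
      h0 (hx0 ▸ Multiset.mem_toFinset.mp hx)
    set A := Finset.univ.filter (fun u : (ZMod p)ˣ => (u : ZMod p) ∈ U) with hA
    set B := Finset.univ.filter (fun u : (ZMod p)ˣ => (u : ZMod p) ∉ U) with hB
    have hcardunits : Fintype.card (ZMod p)ˣ = p - 1 := by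
      rw [ZMod.card_units_eq_totient, Nat.totient_prime hp]
    have hUA : U = A.image (fun u : (ZMod p)ˣ => (u : ZMod p)) := by
      ext x
      simp only [Finset.mem_image, hA, Finset.mem_filter, Finset.mem_univ, true_and]
      constructor
      · intro hx
        obtain ⟨v, hv⟩ := isUnit_iff_ne_zero.mpr (hU0 x hx)
        exact ⟨v, hv ▸ hx, hv⟩
      · rintro ⟨v, hv, rfl⟩; exact hv
    have hAcard : A.card = U.card := by
      rw [hUA, Finset.card_image_of_injective _ Units.val_injective]
    have hABcard : A.card + B.card = p - 1 := by
      rw [← hcardunits, ← Finset.card_univ, hA, hB]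
      exact Finset.card_filter_add_card_filter_not _
    have hBcard : B.card + 1 ≤ d := by omega
    obtain ⟨g, hg⟩ := IsCyclic.exists_generator (α := (ZMod p)ˣ)
    have hgord : orderOf g = p - 1 := by
      rw [orderOf_eq_card_of_forall_mem_zpowers hg, Nat.card_eq_fintype_card, hcardunits]
    set ζ := g ^ d with hζdef
    have hζord : orderOf ζ = k := by
      rw [hζdef, orderOf_pow, hgord, hd, Nat.gcd_eq_right (dvd_mul_left d k),
        Nat.mul_div_cancel _ hdpos]
    set H := Subgroup.zpowers ζ with hH
    haveI : Fintype ((ZMod p)ˣ ⧸ H) := Fintype.ofFinite _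
    have hquot : Fintype.card ((ZMod p)ˣ ⧸ H) = d := by
      have h1 := Subgroup.card_eq_card_quotient_mul_card_subgroup H
      rw [Nat.card_zpowers, hζord, Nat.card_eq_fintype_card, hcardunits, hd,
        Nat.card_eq_fintype_card] at h1
      have h2 : Fintype.card ((ZMod p)ˣ ⧸ H) * k = d * k := by rw [mul_comm d k]; omega
      exact Nat.eq_of_mul_eq_mul_right (by omega) h2
    have hex : ∃ q : (ZMod p)ˣ ⧸ H, q ∉ B.image (QuotientGroup.mk) := by
      by_contra hq
      push_neg at hq
      have hsub : (Finset.univ : Finset ((ZMod p)ˣ ⧸ H)) ⊆ B.image QuotientGroup.mk :=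
        fun q _ => hq q
      have h1 := Finset.card_le_card hsub
      rw [Finset.card_univ, hquot] at h1
      have h2 := Finset.card_image_le (s := B) (f := (QuotientGroup.mk : _ → (ZMod p)ˣ ⧸ H))
      omega
    obtain ⟨q, hq⟩ := hex
    obtain ⟨u, rfl⟩ := QuotientGroup.mk_surjective q
    have hmem' : ∀ i : ℕ, ((u * ζ ^ i : (ZMod p)ˣ) : ZMod p) ∈ U := by
      intro i
      by_contra hiU
      apply hq
      refine Finset.mem_image.mpr ⟨u * ζ ^ i, ?_, ?_⟩
      · rw [hB, Finset.mem_filter]; exact ⟨Finset.mem_univ _, hiU⟩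
      · exact QuotientGroup.mk_mul_of_mem u (H.pow_mem (Subgroup.mem_zpowers ζ) i)
    set F := Finset.image (fun i => ((u * ζ ^ i : (ZMod p)ˣ) : ZMod p)) (Finset.range k)
      with hF
    have hFsub : F ⊆ U := by
      intro x hx
      obtain ⟨i, _, rfl⟩ := Finset.mem_image.mp hx
      exact hmem' i
    have hTle : F.val ≤ S := by
      calc F.val ≤ U.val := Finset.val_le_iff.mpr hFsub
        _ = S.dedup := Multiset.toFinset_val S
        _ ≤ S := Multiset.dedup_le S
    have hTne : F.val ≠ 0 := by
      have hFne : F.Nonempty :=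
        ⟨_, Finset.mem_image.mpr ⟨0, Finset.mem_range.mpr (by omega), rfl⟩⟩
      intro h
      exact hFne.ne_empty (Finset.val_eq_zero.mp h)
    exact hcon F.val hTle hTne (orbit_phi_zero k hk2 ζ u hζord)
  have hne : (DavSet (1 : ZMod p) (-3) 0).Nonempty := ⟨ℓ, hmem⟩
  refine ⟨sInf (DavSet (1 : ZMod p) (-3) 0),
    ⟨Nat.sInf_mem hne, fun b hb => Nat.sInf_le hb⟩, ?_, Nat.sInf_le hmem⟩
  by_contra hD
  push_neg at hD
  have hDdav := Nat.sInf_mem hne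
  obtain ⟨T, hTle, hTne, hTphi⟩ := hDdav.2 (1 ::ₘ 1 ::ₘ {-1}) (by simp; omega)
  exact small_free p hp hp5 T hTle hTne hTphi
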